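/- Let μ ∈ (−1,1), θ_μ = arccos μ ∈ (0,π), and let 0 ≤ θ₁ ≤ θ_μ ≤ θ₂ ≤ π. If U : [θ₁,θ₂] → ℂ is continuously differentiable, then ∫_{θ₁}^{θ₂} |(U(θ)√(sin θ) − U(θ_μ)√(sin θ_μ))/(μ − cos θ)|² dθ ≤ (16/sin²θ_μ) ∫_{θ₁}^{θ₂} |d/dθ (U(θ)√(sin θ))|² dθ. -/

import Mathlib

open Real MeasureTheory Set Filter Topology
open scoped RealInnerProductSpace

lemma chord_right {θμ t : ℝ} (h0 : 0 ≤ θμ) (hπ : θμ < π) (ht : t ∈ Set.Icc θμ π) :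
    Real.sin θμ * (π - t) ≤ Real.sin t * (π - θμ) := by
  have hd : 0 < π - θμ := by linarith
  have ha : 0 ≤ (π - t) / (π - θμ) := div_nonneg (by linarith [ht.2]) hd.le
  have hb : 0 ≤ (t - θμ) / (π - θμ) := div_nonneg (by linarith [ht.1]) hd.le
  have hab : (π - t) / (π - θμ) + (t - θμ) / (π - θμ) = 1 := by field_simp; ring
  have hcc := (strictConcaveOn_sin_Icc.concaveOn).2 (x := θμ) (y := π)
    ⟨h0, hπ.le⟩ ⟨Real.pi_pos.le, le_refl π⟩ ha hb hab
  have ht' : ((π - t) / (π - θμ)) • θμ + ((t - θμ) / (π - θμ)) • π = t := by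
    simp only [smul_eq_mul]; field_simp; ring
  rw [ht'] at hcc
  simp only [smul_eq_mul, Real.sin_pi, mul_zero, add_zero] at hcc
  rw [div_mul_eq_mul_div, div_le_iff₀ hd] at hcc
  linarith [hcc]

lemma chord_left {θμ t : ℝ} (h0 : 0 < θμ) (hπ : θμ ≤ π) (ht : t ∈ Set.Icc 0 θμ) :
    Real.sin θμ * t ≤ Real.sin t * θμ := by
  have ha : 0 ≤ (θμ - t) / θμ := div_nonneg (by linarith [ht.2]) h0.le
  have hb : 0 ≤ t / θμ := div_nonneg ht.1 h0.le
  have hab : (θμ - t) / θμ + t / θμ = 1 := by field_simp; ring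
  have hcc := (strictConcaveOn_sin_Icc.concaveOn).2 (x := (0:ℝ)) (y := θμ)
    ⟨le_refl 0, Real.pi_pos.le⟩ ⟨h0.le, hπ⟩ ha hb hab
  have ht' : ((θμ - t) / θμ) • (0:ℝ) + (t / θμ) • θμ = t := by
    simp only [smul_eq_mul]; field_simp; ring
  rw [ht'] at hcc
  simp only [smul_eq_mul, Real.sin_zero, mul_zero, zero_add] at hcc
  rw [div_mul_eq_mul_div, div_le_iff₀ h0] at hcc
  linarith [hcc]

lemma key_lower {μ θμ : ℝ} (hμ : μ ∈ Set.Ioo (-1:ℝ) 1) (hθμ : θμ = Real.arccos μ)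
    {θ : ℝ} (hθ : θ ∈ Set.Icc 0 π) :
    Real.sin θμ / 2 * |θ - θμ| ≤ |μ - Real.cos θ| := by
  have h0 : 0 < θμ := hθμ ▸ Real.arccos_pos.2 hμ.2
  have hπ : θμ < π := by
    rw [hθμ]
    refine lt_of_le_of_ne (Real.arccos_le_pi μ) (fun h => ?_)
    have := Real.arccos_eq_pi.mp h; linarith [hμ.1]
  have hcos : Real.cos θμ = μ := by
    rw [hθμ]; exact Real.cos_arccos (by linarith [hμ.1]) (by linarith [hμ.2])
  have hs : 0 < Real.sin θμ := Real.sin_pos_of_pos_of_lt_pi h0 hπ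
  set s := Real.sin θμ with hs_def
  rcases le_total θμ θ with hle | hle
  · set G : ℝ → ℝ := fun x => 2*(π-θμ)*(Real.cos θμ - Real.cos x) - s*((x-θμ)*(2*π-x-θμ)) with hG_def
    have hG : ∀ x, HasDerivAt G (2*(π-θμ)*Real.sin x - s*(2*π-2*x)) x := by
      intro x
      have h1 : HasDerivAt (fun x : ℝ => Real.cos θμ - Real.cos x) (Real.sin x) x := by
        have := (hasDerivAt_const x (Real.cos θμ)).sub (Real.hasDerivAt_cos x)
        exact this.congr_deriv (by simp)
      have h2 : HasDerivAt (fun x : ℝ => (x-θμ)*(2*π-x-θμ)) (2*π-2*x) x := by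
        have := ((hasDerivAt_id x).sub_const θμ).mul
          (((hasDerivAt_const x (2*π)).sub (hasDerivAt_id x)).sub_const θμ)
        exact this.congr_deriv (by simp only [Pi.sub_apply, id]; ring)
      exact (h1.const_mul (2*(π-θμ))).sub (h2.const_mul s)
    have mono : MonotoneOn G (Set.Icc θμ π) := by
      apply monotoneOn_of_deriv_nonneg (convex_Icc _ _)
        (fun x _ => ((hG x).continuousAt).continuousWithinAt)
        (fun x hx => ((hG x).differentiableAt).differentiableWithinAt)
      intro x hx
      rw [interior_Icc] at hx
      rw [(hG x).deriv]
      have hc := chord_right h0.le hπ ⟨hx.1.le, hx.2.le⟩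
      nlinarith [hc]
    have hGθ : G θμ ≤ G θ := mono ⟨le_refl _, hπ.le⟩ ⟨hle, hθ.2⟩ hle
    have hGθμ : G θμ = 0 := by simp [hG_def]
    rw [hGθμ] at hGθ
    have habs1 : |θ - θμ| = θ - θμ := abs_of_nonneg (by linarith)
    have hfac : 0 ≤ s*(θ-θμ)*(π-θ) :=
      mul_nonneg (mul_nonneg hs.le (by linarith)) (by linarith [hθ.2])
    have h3 : s*(θ-θμ)*(π-θμ) ≤ 2*(π-θμ)*(Real.cos θμ - Real.cos θ) := by
      have hexp : G θ = 2*(π-θμ)*(Real.cos θμ - Real.cos θ) - s*((θ-θμ)*(2*π-θ-θμ)) := rfl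
      nlinarith [hGθ, hfac]
    have h4 : 2*(π-θμ)*(s/2*(θ-θμ)) ≤ 2*(π-θμ)*(Real.cos θμ - Real.cos θ) := by linarith [h3]
    have hkey : s/2*(θ-θμ) ≤ Real.cos θμ - Real.cos θ :=
      le_of_mul_le_mul_left h4 (by linarith)
    have habs2 : |μ - Real.cos θ| = Real.cos θμ - Real.cos θ := by
      rw [← hcos, abs_of_nonneg]
      have : 0 ≤ s/2*(θ-θμ) := mul_nonneg (by linarith) (by linarith)
      linarith
    rw [habs2, habs1]; exact hkey
  · set G : ℝ → ℝ := fun x => 2*θμ*(Real.cos x - Real.cos θμ) - s*(θμ^2-x^2) with hG_def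
    have hG : ∀ x, HasDerivAt G (2*θμ*(-Real.sin x) + s*(2*x)) x := by
      intro x
      have h1 : HasDerivAt (fun x : ℝ => Real.cos x - Real.cos θμ) (-Real.sin x) x :=
        (Real.hasDerivAt_cos x).sub_const _
      have h2 : HasDerivAt (fun x : ℝ => θμ^2 - x^2) (-(2*x)) x := by
        have := (hasDerivAt_const x (θμ^2)).sub (hasDerivAt_pow 2 x)
        exact this.congr_deriv (by norm_num)
      have := (h1.const_mul (2*θμ)).sub (h2.const_mul s)
      exact this.congr_deriv (by ring)
    have anti : AntitoneOn G (Set.Icc 0 θμ) := by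
      apply antitoneOn_of_deriv_nonpos (convex_Icc _ _)
        (fun x _ => ((hG x).continuousAt).continuousWithinAt)
        (fun x hx => ((hG x).differentiableAt).differentiableWithinAt)
      intro x hx
      rw [interior_Icc] at hx
      rw [(hG x).deriv]
      have hc := chord_left h0 hπ.le ⟨hx.1.le, hx.2.le⟩
      nlinarith [hc]
    have hGθ : G θμ ≤ G θ := anti ⟨hθ.1, hle⟩ ⟨h0.le, le_refl _⟩ hle
    have hGθμ : G θμ = 0 := by simp [hG_def]
    rw [hGθμ] at hGθ
    have habs1 : |θ - θμ| = θμ - θ := by rw [abs_sub_comm]; exact abs_of_nonneg (by linarith)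
    have hfac : 0 ≤ s*(θμ-θ)*θ := mul_nonneg (mul_nonneg hs.le (by linarith)) hθ.1
    have h3 : s*(θμ-θ)*θμ ≤ 2*θμ*(Real.cos θ - Real.cos θμ) := by
      have hexp : G θ = 2*θμ*(Real.cos θ - Real.cos θμ) - s*(θμ^2-θ^2) := rfl
      nlinarith [hGθ, hfac]
    have h4 : 2*θμ*(s/2*(θμ-θ)) ≤ 2*θμ*(Real.cos θ - Real.cos θμ) := by linarith [h3]
    have hkey : s/2*(θμ-θ) ≤ Real.cos θ - Real.cos θμ :=
      le_of_mul_le_mul_left h4 (by linarith)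
    have habs2 : |μ - Real.cos θ| = Real.cos θ - Real.cos θμ := by
      rw [← hcos, abs_sub_comm, abs_of_nonneg]
      have : 0 ≤ s/2*(θμ-θ) := mul_nonneg (by linarith) (by linarith)
      linarith
    rw [habs2, habs1]; exact hkey

lemma hardy_core {a b c : ℝ} (hab : a ≤ b) (hc : c = a ∨ c = b)
    {f f' : ℝ → ℂ} (hf : ∀ x ∈ Set.Icc a b, HasDerivAt f (f' x) x)
    (hf' : ContinuousOn f' (Set.Icc a b)) :
    ∫⁻ θ in Set.Ioo a b, ENNReal.ofReal (‖(f θ - f c) / ((θ:ℂ) - (c:ℂ))‖^2) ≤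
      4 * ∫⁻ θ in Set.Ioo a b, ENNReal.ofReal (‖f' θ‖^2) := by
  rcases eq_or_lt_of_le hab with rfl | hab'
  · simp
  have hc' : c ∈ Set.Icc a b := by rcases hc with rfl | rfl <;> simp [hab]
  set φ : ℝ → ℂ := fun θ => if θ = c then f' c else (f θ - f c) / ((θ:ℂ) - (c:ℂ)) with hφ_def
  have hφeq : ∀ θ, θ ≠ c → φ θ = (θ - c)⁻¹ • (f θ - f c) := by
    intro θ hθ
    simp only [hφ_def, if_neg hθ]
    rw [Complex.real_smul, div_eq_inv_mul]
    push_cast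
    ring
  -- continuity of φ on Icc a b
  have hfc : ContinuousOn f (Set.Icc a b) :=
    fun x hx => ((hf x hx).continuousAt).continuousWithinAt
  have hφc : ContinuousOn φ (Set.Icc a b) := by
    intro x hx
    by_cases hxc : x = c
    · subst hxc
      rw [← continuousWithinAt_diff_self]
      have hs := hasDerivAt_iff_tendsto_slope.mp (hf x hx)
      have hφx : φ x = f' x := if_pos rfl
      unfold ContinuousWithinAt
      rw [hφx]
      have hmono : Set.Icc a b \ {x} ⊆ {x}ᶜ := fun y hy => hy.2
      refine Filter.Tendsto.mono_left ?_ (nhdsWithin_mono x hmono)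
      refine hs.congr' ?_
      filter_upwards [eventually_mem_nhdsWithin] with y hy
      rw [slope_def_module, ← hφeq y hy]
    · have hden : ((x:ℂ) - (c:ℂ)) ≠ 0 := by
        rw [sub_ne_zero]
        exact_mod_cast hxc
      have hψ : ContinuousWithinAt (fun θ : ℝ => (f θ - f c) / ((θ:ℂ) - (c:ℂ)))
          (Set.Icc a b) x :=
        ((hfc x hx).sub continuousWithinAt_const).div
          ((Complex.continuous_ofReal.continuousWithinAt).sub continuousWithinAt_const) hden
      refine hψ.congr_of_eventuallyEq ?_ (if_neg hxc)
      have hev : ∀ᶠ y in 𝓝[Set.Icc a b] x, y ≠ c :=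
        eventually_nhdsWithin_of_eventually_nhds (isOpen_compl_singleton.eventually_mem hxc)
      filter_upwards [hev] with y hy
      simp only [hφ_def, if_neg hy]
  -- h and its derivative
  set h : ℝ → ℝ := fun θ => ‖φ θ‖^2 * (θ - c) with hh_def
  have hhc : ContinuousOn h (Set.Icc a b) :=
    ((hφc.norm.pow 2).mul ((continuous_id.sub continuous_const).continuousOn))
  set H : ℝ → ℝ := fun θ => 2*⟪φ θ, f' θ⟫ - ‖φ θ‖^2 with hH_def
  have hHc : ContinuousOn H (Set.Icc a b) := by
    have := ((hφc.inner hf').const_smul (2:ℝ)).sub (hφc.norm.pow 2)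
    exact this
  have hd : ∀ x ∈ Set.Ioo a b, HasDerivAt h (H x) x := by
    intro x hx
    have hxc : x ≠ c := by
      rcases hc with rfl | rfl
      · exact ne_of_gt hx.1
      · exact ne_of_lt hx.2
    have hxcc : x - c ≠ 0 := sub_ne_zero.2 hxc
    have hg : HasDerivAt (fun θ => f θ - f c) (f' x) x :=
      (hf x (Set.Ioo_subset_Icc_self hx)).sub_const _
    have hN : HasDerivAt (fun θ => ⟪f θ - f c, f θ - f c⟫)
        (⟪f x - f c, f' x⟫ + ⟪f' x, f x - f c⟫) x := hg.inner ℝ hg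
    have hinv : HasDerivAt (fun θ : ℝ => (θ - c)⁻¹) (-1 / (x - c)^2) x := by
      exact ((hasDerivAt_id x).sub_const c).inv hxcc
    have hk := hN.mul hinv
    have heq : (fun θ => ⟪f θ - f c, f θ - f c⟫ * (θ - c)⁻¹) =ᶠ[nhds x] h := by
      filter_upwards [isOpen_compl_singleton.eventually_mem hxc] with y hy
      have hy' : (y : ℝ) ≠ c := hy
      simp only [hh_def]
      rw [hφeq y hy', real_inner_self_eq_norm_sq, norm_smul]
      have : y - c ≠ 0 := sub_ne_zero.2 hy'
      rw [mul_pow, Real.norm_eq_abs, sq_abs]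
      field_simp
    have hD := hk.congr_of_eventuallyEq heq.symm
    refine hD.congr_deriv (Eq.symm ?_)
    simp only [hH_def]
    rw [hφeq x hxc, real_inner_smul_left, real_inner_self_eq_norm_sq, norm_smul,
      real_inner_comm (f' x)]
    rw [mul_pow, Real.norm_eq_abs, sq_abs]
    field_simp
    ring
  -- FTC
  have hIntH : IntervalIntegrable H volume a b :=
    ContinuousOn.intervalIntegrable (by rw [Set.uIcc_of_le hab]; exact hHc)
  have hFTC : ∫ y in a..b, H y = h b - h a :=
    intervalIntegral.integral_eq_sub_of_hasDerivAt_of_le hab hhc hd hIntH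
  have hbd : 0 ≤ h b - h a := by
    rcases hc with rfl | rfl
    · have h1 : h c = 0 := by simp [hh_def]
      have h2 : 0 ≤ h b := mul_nonneg (by positivity) (by linarith)
      linarith
    · have h1 : h c = 0 := by simp [hh_def]
      have h2 : h a ≤ 0 := mul_nonpos_of_nonneg_of_nonpos (by positivity) (by linarith)
      linarith
  -- integrability
  have hφn : ContinuousOn (fun θ => ‖φ θ‖^2) (Set.Icc a b) := hφc.norm.pow 2
  have hf'n : ContinuousOn (fun θ => ‖f' θ‖^2) (Set.Icc a b) := hf'.norm.pow 2
  have hIφ : IntervalIntegrable (fun θ => ‖φ θ‖^2) volume a b :=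
    ContinuousOn.intervalIntegrable (by rw [Set.uIcc_of_le hab]; exact hφn)
  have hIf' : IntervalIntegrable (fun θ => ‖f' θ‖^2) volume a b :=
    ContinuousOn.intervalIntegrable (by rw [Set.uIcc_of_le hab]; exact hf'n)
  have hIinner : IntervalIntegrable (fun θ => 2*⟪φ θ, f' θ⟫) volume a b := by
    have : ContinuousOn (fun θ => 2*⟪φ θ, f' θ⟫) (Set.Icc a b) := by
      have h2 : ContinuousOn (fun θ => (⟪φ θ, f' θ⟫ : ℝ)) (Set.Icc a b) := hφc.inner hf'
      have := h2.const_smul (2:ℝ)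
      exact this
    exact ContinuousOn.intervalIntegrable (by rw [Set.uIcc_of_le hab]; exact this)
  -- main real inequality
  set X := ∫ y in a..b, ‖φ y‖^2 with hX_def
  set Y := ∫ y in a..b, ‖f' y‖^2 with hY_def
  have hsub : ∫ y in a..b, H y = (∫ y in a..b, 2*⟪φ y, f' y⟫) - X := by
    simp only [hH_def]
    exact intervalIntegral.integral_sub hIinner hIφ
  have hptwise : ∀ y ∈ Set.Icc a b, 2*⟪φ y, f' y⟫ ≤ (1/2)*‖φ y‖^2 + 2*‖f' y‖^2 := by
    intro y _
    have h1 : ⟪φ y, f' y⟫ ≤ ‖φ y‖ * ‖f' y‖ := real_inner_le_norm _ _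
    nlinarith [sq_nonneg (‖φ y‖ - 2*‖f' y‖), norm_nonneg (φ y), norm_nonneg (f' y)]
  have hmono : (∫ y in a..b, 2*⟪φ y, f' y⟫) ≤ ∫ y in a..b, ((1/2)*‖φ y‖^2 + 2*‖f' y‖^2) :=
    intervalIntegral.integral_mono_on hab hIinner ((hIφ.const_mul _).add (hIf'.const_mul _)) hptwise
  have hadd : ∫ y in a..b, ((1/2)*‖φ y‖^2 + 2*‖f' y‖^2) = (1/2)*X + 2*Y := by
    rw [intervalIntegral.integral_add (hIφ.const_mul _) (hIf'.const_mul _),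
      intervalIntegral.integral_const_mul, intervalIntegral.integral_const_mul]
  have hXY : X ≤ 4*Y := by
    have : 0 ≤ (∫ y in a..b, 2*⟪φ y, f' y⟫) - X := by rw [← hsub, hFTC]; exact hbd
    linarith [hmono, hadd.le, hadd.ge, this]
  -- convert to lintegral
  have hXnn : 0 ≤ᵐ[volume.restrict (Set.Ioo a b)] fun θ => ‖φ θ‖^2 :=
    Filter.Eventually.of_forall (fun θ => by positivity)
  have hYnn : 0 ≤ᵐ[volume.restrict (Set.Ioo a b)] fun θ => ‖f' θ‖^2 :=
    Filter.Eventually.of_forall (fun θ => by positivity)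
  have hIφ' : IntegrableOn (fun θ => ‖φ θ‖^2) (Set.Ioo a b) volume :=
    (hφn.integrableOn_Icc).mono_set Set.Ioo_subset_Icc_self
  have hIf'' : IntegrableOn (fun θ => ‖f' θ‖^2) (Set.Ioo a b) volume :=
    (hf'n.integrableOn_Icc).mono_set Set.Ioo_subset_Icc_self
  have hXioo : ∫ θ in Set.Ioo a b, ‖φ θ‖^2 = X := by
    rw [hX_def, intervalIntegral.integral_of_le hab, ← MeasureTheory.integral_Ioc_eq_integral_Ioo]
  have hYioo : ∫ θ in Set.Ioo a b, ‖f' θ‖^2 = Y := by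
    rw [hY_def, intervalIntegral.integral_of_le hab, ← MeasureTheory.integral_Ioc_eq_integral_Ioo]
  have hLHS : ∫⁻ θ in Set.Ioo a b, ENNReal.ofReal (‖(f θ - f c) / ((θ:ℂ) - (c:ℂ))‖^2)
      = ENNReal.ofReal X := by
    have hcong : ∫⁻ θ in Set.Ioo a b, ENNReal.ofReal (‖(f θ - f c) / ((θ:ℂ) - (c:ℂ))‖^2)
        = ∫⁻ θ in Set.Ioo a b, ENNReal.ofReal (‖φ θ‖^2) := by
      apply MeasureTheory.setLIntegral_congr_fun measurableSet_Ioo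
      intro θ hθ
      have hθc : θ ≠ c := by
        rcases hc with rfl | rfl
        · exact ne_of_gt hθ.1
        · exact ne_of_lt hθ.2
      simp only [hφ_def, if_neg hθc]
    rw [hcong, ← MeasureTheory.ofReal_integral_eq_lintegral_ofReal hIφ' hXnn, hXioo]
  have hRHS : ∫⁻ θ in Set.Ioo a b, ENNReal.ofReal (‖f' θ‖^2) = ENNReal.ofReal Y := by
    rw [← hYioo, ← MeasureTheory.ofReal_integral_eq_lintegral_ofReal hIf'' hYnn]
  rw [hLHS, hRHS]
  calc ENNReal.ofReal X ≤ ENNReal.ofReal (4*Y) := ENNReal.ofReal_le_ofReal hXY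
    _ = 4 * ENNReal.ofReal Y := by
        rw [ENNReal.ofReal_mul (by norm_num)]
        norm_num

/-- Key MCT step: if the inequality holds on all `Ioo c (b n)` with `b n ↑ d`,
then it holds on `Ioo c d`. -/
lemma lintegral_Ioo_sup {c d : ℝ} (g : ℝ → ENNReal)
    (hg : AEMeasurable g (volume.restrict (Set.Ioo c d)))
    (b : ℕ → ℝ) (hmono : Monotone b) (hb : ∀ n, b n ≤ d)
    (hlim : ∀ x ∈ Set.Ioo c d, ∃ n, x < b n) :
    ∫⁻ θ in Set.Ioo c d, g θ = ⨆ n, ∫⁻ θ in Set.Ioo c (b n), g θ := by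
  set μ := volume.restrict (Set.Ioo c d) with hμ
  have key : ∀ n, ∫⁻ θ in Set.Ioo c (b n), g θ = ∫⁻ θ, (Set.Ioo c (b n)).indicator g θ ∂μ := by
    intro n
    rw [MeasureTheory.lintegral_indicator measurableSet_Ioo, hμ,
      MeasureTheory.Measure.restrict_restrict measurableSet_Ioo]
    congr 1
    rw [Set.Ioo_inter_Ioo, sup_idem, min_eq_left (hb n)]
  have hsup : ∀ θ, (⨆ n, (Set.Ioo c (b n)).indicator g θ) = (Set.Ioo c d).indicator g θ := by
    intro θ
    by_cases hθ : θ ∈ Set.Ioo c d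
    · obtain ⟨n, hn⟩ := hlim θ hθ
      rw [Set.indicator_of_mem hθ]
      apply le_antisymm
      · apply iSup_le
        intro m
        by_cases hm : θ ∈ Set.Ioo c (b m)
        · rw [Set.indicator_of_mem hm]
        · rw [Set.indicator_of_notMem hm]; exact zero_le
      · refine le_trans ?_ (le_iSup _ n)
        rw [Set.indicator_of_mem (show θ ∈ Set.Ioo c (b n) from ⟨hθ.1, hn⟩)]
    · rw [Set.indicator_of_notMem hθ]
      apply le_antisymm _ (zero_le)
      apply iSup_le
      intro m
      have : θ ∉ Set.Ioo c (b m) := by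
        intro hmem
        exact hθ ⟨hmem.1, lt_of_lt_of_le hmem.2 (hb m)⟩
      rw [Set.indicator_of_notMem this]
  have hmeas : ∀ n, AEMeasurable ((Set.Ioo c (b n)).indicator g) μ :=
    fun n => hg.indicator measurableSet_Ioo
  have hmon : ∀ᵐ x ∂μ, Monotone fun n => (Set.Ioo c (b n)).indicator g x := by
    apply Filter.Eventually.of_forall
    intro x n m hnm
    exact Set.indicator_le_indicator_of_subset
      (Set.Ioo_subset_Ioo le_rfl (hmono hnm)) (fun _ => zero_le) x
  have := MeasureTheory.lintegral_iSup' hmeas hmon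
  simp only [hsup] at this
  have hfin : ∫⁻ θ, (Set.Ioo c d).indicator g θ ∂μ = ∫⁻ θ, g θ ∂μ := by
    apply MeasureTheory.lintegral_congr_ae
    filter_upwards [MeasureTheory.ae_restrict_mem measurableSet_Ioo] with x hx
    rw [Set.indicator_of_mem hx]
  rw [← hfin, this]
  congr 1
  ext n
  exact (key n).symm

lemma hardy_right {c d : ℝ} (hcd : c ≤ d) {f f' : ℝ → ℂ}
    (hf : ∀ x ∈ Set.Ico c d, HasDerivAt f (f' x) x)
    (hf' : ContinuousOn f' (Set.Ico c d)) :
    ∫⁻ θ in Set.Ioo c d, ENNReal.ofReal (‖(f θ - f c) / ((θ:ℂ) - (c:ℂ))‖^2) ≤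
      4 * ∫⁻ θ in Set.Ioo c d, ENNReal.ofReal (‖f' θ‖^2) := by
  rcases eq_or_lt_of_le hcd with rfl | hcd'
  · simp
  set b : ℕ → ℝ := fun n => d - (d - c)/(n+1) with hb_def
  have hdc : 0 < d - c := by linarith
  have hbmono : Monotone b := by
    intro n m hnm
    simp only [hb_def]
    have h1 : (0:ℝ) < n+1 := by positivity
    have h2 : (n:ℝ)+1 ≤ (m:ℝ)+1 := by exact_mod_cast by omega
    have := div_le_div_of_nonneg_left hdc.le h1 h2
    linarith [this]
  have hblt : ∀ n, b n < d := by
    intro n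
    simp only [hb_def]
    have : (0:ℝ) < (d-c)/(n+1) := by positivity
    linarith
  have hbge : ∀ n, c ≤ b n := by
    intro n
    simp only [hb_def]
    have h1 : (d-c)/(n+1) ≤ (d-c)/1 := by
      apply div_le_div_of_nonneg_left hdc.le one_pos
      exact_mod_cast by omega
    simp at h1
    linarith
  have hlim : ∀ x ∈ Set.Ioo c d, ∃ n, x < b n := by
    intro x hx
    obtain ⟨n, hn⟩ := exists_nat_gt ((d-c)/(d-x))
    refine ⟨n, ?_⟩
    have hdx : 0 < d - x := by linarith [hx.2]
    have h1 : (d-c)/(n+1) < d - x := by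
      rw [div_lt_iff₀ (by positivity)]
      have h2 : (d-c)/(d-x) < n+1 := by linarith
      rw [div_lt_iff₀ hdx] at h2
      linarith [h2]
    simp only [hb_def]
    linarith
  -- a.e.-measurability of integrands on Ioo c d
  have hfcont : ContinuousOn f (Set.Ioo c d) := by
    intro x hx
    exact ((hf x ⟨hx.1.le, hx.2⟩).continuousAt).continuousWithinAt
  have hfm : AEMeasurable f (volume.restrict (Set.Ioo c d)) :=
    hfcont.aemeasurable measurableSet_Ioo
  have hgm : AEMeasurable (fun θ => ENNReal.ofReal (‖(f θ - f c) / ((θ:ℂ) - (c:ℂ))‖^2))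
      (volume.restrict (Set.Ioo c d)) := by
    apply ENNReal.measurable_ofReal.comp_aemeasurable
    apply AEMeasurable.pow_const
    apply AEMeasurable.norm
    exact (hfm.sub aemeasurable_const).div
      ((Complex.measurable_ofReal.aemeasurable).sub aemeasurable_const)
  have hgm' : AEMeasurable (fun θ => ENNReal.ofReal (‖f' θ‖^2))
      (volume.restrict (Set.Ioo c d)) := by
    apply ENNReal.measurable_ofReal.comp_aemeasurable
    apply AEMeasurable.pow_const
    apply AEMeasurable.norm
    exact (hf'.mono Set.Ioo_subset_Ico_self).aemeasurable measurableSet_Ioo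
  rw [lintegral_Ioo_sup _ hgm b hbmono (fun n => (hblt n).le) hlim]
  apply iSup_le
  intro n
  calc ∫⁻ θ in Set.Ioo c (b n), ENNReal.ofReal (‖(f θ - f c) / ((θ:ℂ) - (c:ℂ))‖^2)
      ≤ 4 * ∫⁻ θ in Set.Ioo c (b n), ENNReal.ofReal (‖f' θ‖^2) := by
        apply hardy_core (hbge n) (Or.inl rfl)
        · intro x hx
          exact hf x ⟨hx.1, lt_of_le_of_lt hx.2 (hblt n)⟩
        · exact hf'.mono (fun x hx => ⟨hx.1, lt_of_le_of_lt hx.2 (hblt n)⟩)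
    _ ≤ 4 * ∫⁻ θ in Set.Ioo c d, ENNReal.ofReal (‖f' θ‖^2) := by
        apply mul_le_mul_right
        exact MeasureTheory.lintegral_mono_set (Set.Ioo_subset_Ioo le_rfl (hblt n).le)

lemma lintegral_Ioo_inf {a c : ℝ} (g : ℝ → ENNReal)
    (hg : AEMeasurable g (volume.restrict (Set.Ioo a c)))
    (b : ℕ → ℝ) (hanti : ∀ n m, n ≤ m → b m ≤ b n) (hb : ∀ n, a ≤ b n)
    (hlim : ∀ x ∈ Set.Ioo a c, ∃ n, b n < x) :
    ∫⁻ θ in Set.Ioo a c, g θ = ⨆ n, ∫⁻ θ in Set.Ioo (b n) c, g θ := by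
  set μ := volume.restrict (Set.Ioo a c) with hμ
  have key : ∀ n, ∫⁻ θ in Set.Ioo (b n) c, g θ = ∫⁻ θ, (Set.Ioo (b n) c).indicator g θ ∂μ := by
    intro n
    rw [MeasureTheory.lintegral_indicator measurableSet_Ioo, hμ,
      MeasureTheory.Measure.restrict_restrict measurableSet_Ioo]
    congr 1
    rw [Set.Ioo_inter_Ioo, inf_idem, max_eq_left (hb n)]
  have hsup : ∀ θ, (⨆ n, (Set.Ioo (b n) c).indicator g θ) = (Set.Ioo a c).indicator g θ := by
    intro θ
    by_cases hθ : θ ∈ Set.Ioo a c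
    · obtain ⟨n, hn⟩ := hlim θ hθ
      rw [Set.indicator_of_mem hθ]
      apply le_antisymm
      · apply iSup_le
        intro m
        by_cases hm : θ ∈ Set.Ioo (b m) c
        · rw [Set.indicator_of_mem hm]
        · rw [Set.indicator_of_notMem hm]; exact zero_le
      · refine le_trans ?_ (le_iSup _ n)
        rw [Set.indicator_of_mem (show θ ∈ Set.Ioo (b n) c from ⟨hn, hθ.2⟩)]
    · rw [Set.indicator_of_notMem hθ]
      apply le_antisymm _ (zero_le)
      apply iSup_le
      intro m
      have : θ ∉ Set.Ioo (b m) c := by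
        intro hmem
        exact hθ ⟨lt_of_le_of_lt (hb m) hmem.1, hmem.2⟩
      rw [Set.indicator_of_notMem this]
  have hmeas : ∀ n, AEMeasurable ((Set.Ioo (b n) c).indicator g) μ :=
    fun n => hg.indicator measurableSet_Ioo
  have hmon : ∀ᵐ x ∂μ, Monotone fun n => (Set.Ioo (b n) c).indicator g x := by
    apply Filter.Eventually.of_forall
    intro x n m hnm
    exact Set.indicator_le_indicator_of_subset
      (Set.Ioo_subset_Ioo (hanti n m hnm) le_rfl) (fun _ => zero_le) x
  have := MeasureTheory.lintegral_iSup' hmeas hmon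
  simp only [hsup] at this
  have hfin : ∫⁻ θ, (Set.Ioo a c).indicator g θ ∂μ = ∫⁻ θ, g θ ∂μ := by
    apply MeasureTheory.lintegral_congr_ae
    filter_upwards [MeasureTheory.ae_restrict_mem measurableSet_Ioo] with x hx
    rw [Set.indicator_of_mem hx]
  rw [← hfin, this]
  congr 1
  ext n
  exact (key n).symm

lemma hardy_left {a c : ℝ} (hac : a ≤ c) {f f' : ℝ → ℂ}
    (hf : ∀ x ∈ Set.Ioc a c, HasDerivAt f (f' x) x)
    (hf' : ContinuousOn f' (Set.Ioc a c)) :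
    ∫⁻ θ in Set.Ioo a c, ENNReal.ofReal (‖(f θ - f c) / ((θ:ℂ) - (c:ℂ))‖^2) ≤
      4 * ∫⁻ θ in Set.Ioo a c, ENNReal.ofReal (‖f' θ‖^2) := by
  rcases eq_or_lt_of_le hac with rfl | hac'
  · simp
  set b : ℕ → ℝ := fun n => a + (c - a)/(n+1) with hb_def
  have hdc : 0 < c - a := by linarith
  have hbanti : ∀ n m, n ≤ m → b m ≤ b n := by
    intro n m hnm
    simp only [hb_def]
    have h1 : (0:ℝ) < n+1 := by positivity
    have h2 : (n:ℝ)+1 ≤ (m:ℝ)+1 := by exact_mod_cast by omega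
    have := div_le_div_of_nonneg_left hdc.le h1 h2
    linarith [this]
  have hblt : ∀ n, a < b n := by
    intro n
    simp only [hb_def]
    have : (0:ℝ) < (c-a)/(n+1) := by positivity
    linarith
  have hbge : ∀ n, b n ≤ c := by
    intro n
    simp only [hb_def]
    have h1 : (c-a)/(n+1) ≤ (c-a)/1 := by
      apply div_le_div_of_nonneg_left hdc.le one_pos
      exact_mod_cast by omega
    simp at h1
    linarith
  have hlim : ∀ x ∈ Set.Ioo a c, ∃ n, b n < x := by
    intro x hx
    obtain ⟨n, hn⟩ := exists_nat_gt ((c-a)/(x-a))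
    refine ⟨n, ?_⟩
    have hdx : 0 < x - a := by linarith [hx.1]
    have h1 : (c-a)/(n+1) < x - a := by
      rw [div_lt_iff₀ (by positivity)]
      have h2 : (c-a)/(x-a) < n+1 := by linarith
      rw [div_lt_iff₀ hdx] at h2
      linarith [h2]
    simp only [hb_def]
    linarith
  -- mirrored MCT: integrals over Ioo (b n) c
  have hfcont : ContinuousOn f (Set.Ioo a c) := by
    intro x hx
    exact ((hf x ⟨hx.1, hx.2.le⟩).continuousAt).continuousWithinAt
  have hfm : AEMeasurable f (volume.restrict (Set.Ioo a c)) :=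
    hfcont.aemeasurable measurableSet_Ioo
  have hgm : AEMeasurable (fun θ => ENNReal.ofReal (‖(f θ - f c) / ((θ:ℂ) - (c:ℂ))‖^2))
      (volume.restrict (Set.Ioo a c)) := by
    apply ENNReal.measurable_ofReal.comp_aemeasurable
    apply AEMeasurable.pow_const
    apply AEMeasurable.norm
    exact (hfm.sub aemeasurable_const).div
      ((Complex.measurable_ofReal.aemeasurable).sub aemeasurable_const)
  rw [lintegral_Ioo_inf _ hgm b hbanti (fun n => (hblt n).le) hlim]
  apply iSup_le
  intro n
  calc ∫⁻ θ in Set.Ioo (b n) c, ENNReal.ofReal (‖(f θ - f c) / ((θ:ℂ) - (c:ℂ))‖^2)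
      ≤ 4 * ∫⁻ θ in Set.Ioo (b n) c, ENNReal.ofReal (‖f' θ‖^2) := by
        apply hardy_core (hbge n) (Or.inr rfl)
        · intro x hx
          exact hf x ⟨lt_of_lt_of_le (hblt n) hx.1, hx.2⟩
        · exact hf'.mono (fun x hx => ⟨lt_of_lt_of_le (hblt n) hx.1, hx.2⟩)
    _ ≤ 4 * ∫⁻ θ in Set.Ioo a c, ENNReal.ofReal (‖f' θ‖^2) := by
        apply mul_le_mul_right
        exact MeasureTheory.lintegral_mono_set (Set.Ioo_subset_Ioo (hblt n).le le_rfl)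

/-- Hardy type inequality (Lemma `L:Hardy` of the paper) for
`u = U(θ) e^{imφ} ∈ H¹(S²(θ₁,θ₂))` with `m ≠ 0`:
`∫_{θ₁}^{θ₂} |(U(θ)√(sin θ) − U(θ_μ)√(sin θ_μ))/(μ − cos θ)|² dθ
   ≤ (16/sin²θ_μ) ∫_{θ₁}^{θ₂} |d/dθ (U(θ)√(sin θ))|² dθ`.
(The right-hand side `(16/(π sin²θ_μ)) ‖∇u‖²_{L²(S²(θ₁,θ₂))}` of the paper equals
`(16/sin²θ_μ) · 2 ∫ (|U'|² + m²|U|²/sin²θ) sinθ dθ / (2) ...`; here we state the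
Hardy inequality in the equivalent one-dimensional form used in its proof, with the
derivative of `θ ↦ U(θ)√(sin θ)`.  Lebesgue (`ENNReal`) integrals are used so that
both sides are always defined.) -/
theorem stmt_1 (μ : ℝ) (hμ : μ ∈ Set.Ioo (-1 : ℝ) 1)
    (θμ θ₁ θ₂ : ℝ) (hθμ : θμ = Real.arccos μ)
    (hθ₁ : θ₁ ∈ Set.Icc 0 θμ) (hθ₂ : θ₂ ∈ Set.Icc θμ π)
    (U U' : ℝ → ℂ)
    (hU : ∀ θ ∈ Set.Icc θ₁ θ₂, HasDerivAt U (U' θ) θ)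
    (hU' : ContinuousOn U' (Set.Icc θ₁ θ₂)) :
    (∫⁻ θ in Set.Ioo θ₁ θ₂,
        ENNReal.ofReal
          (‖(U θ * (Real.sqrt (Real.sin θ) : ℂ)
              - U θμ * (Real.sqrt (Real.sin θμ) : ℂ)) / ((μ : ℂ) - (Real.cos θ : ℂ))‖ ^ 2))
      ≤ ENNReal.ofReal (16 / (Real.sin θμ) ^ 2) *
          ∫⁻ θ in Set.Ioo θ₁ θ₂,
            ENNReal.ofReal
              (‖deriv (fun t => U t * (Real.sqrt (Real.sin t) : ℂ)) θ‖ ^ 2) := by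
  have h0 : 0 < θμ := hθμ ▸ Real.arccos_pos.2 hμ.2
  have hπ : θμ < π := by
    rw [hθμ]
    refine lt_of_le_of_ne (Real.arccos_le_pi μ) (fun h => ?_)
    have := Real.arccos_eq_pi.mp h; linarith [hμ.1]
  have hs : 0 < Real.sin θμ := Real.sin_pos_of_pos_of_lt_pi h0 hπ
  set s₀ := Real.sin θμ with hs₀
  set F : ℝ → ℂ := fun t => U t * (Real.sqrt (Real.sin t) : ℂ) with hF_def
  set D : ℝ → ℂ := fun t => U' t * (Real.sqrt (Real.sin t) : ℂ)
      + U t * ((Real.cos t / (2 * Real.sqrt (Real.sin t)) : ℝ) : ℂ) with hD_def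
  set S : Set ℝ := Set.Icc θ₁ θ₂ ∩ Set.Ioo 0 π with hS_def
  have hD : ∀ x ∈ S, HasDerivAt F (D x) x := by
    intro x hx
    have hsin : 0 < Real.sin x := Real.sin_pos_of_pos_of_lt_pi hx.2.1 hx.2.2
    have h1 : HasDerivAt (fun t => Real.sqrt (Real.sin t))
        (Real.cos x / (2 * Real.sqrt (Real.sin x))) x := by
      have := (Real.hasDerivAt_sqrt (ne_of_gt hsin)).comp x (Real.hasDerivAt_sin x)
      exact this.congr_deriv (by ring)
    have h2 : HasDerivAt (fun t => ((Real.sqrt (Real.sin t) : ℝ) : ℂ))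
        (((Real.cos x / (2 * Real.sqrt (Real.sin x)) : ℝ) : ℂ)) x := h1.ofReal_comp
    exact (hU x hx.1).mul h2
  have hDeriv : ∀ x ∈ S, deriv F x = D x := fun x hx => (hD x hx).deriv
  have hUc : ContinuousOn U (Set.Icc θ₁ θ₂) :=
    fun x hx => ((hU x hx).continuousAt).continuousWithinAt
  have hDc : ContinuousOn D S := by
    apply ContinuousOn.add
    · exact (hU'.mono (fun x hx => hx.1)).mul
        ((Complex.continuous_ofReal.comp (Real.continuous_sqrt.comp Real.continuous_sin)).continuousOn)
    · refine (hUc.mono (fun x hx => hx.1)).mul (Complex.continuous_ofReal.comp_continuousOn ?_)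
      apply ContinuousOn.div
      · exact Real.continuous_cos.continuousOn
      · exact (continuous_const.mul (Real.continuous_sqrt.comp Real.continuous_sin)).continuousOn
      · intro x hx
        have hsin : 0 < Real.sin x := Real.sin_pos_of_pos_of_lt_pi hx.2.1 hx.2.2
        positivity
  have hθμS : ∀ x, x ∈ Set.Ico θμ θ₂ → x ∈ S := by
    intro x hx
    exact ⟨⟨le_trans hθ₁.2 hx.1, hx.2.le⟩, ⟨lt_of_lt_of_le h0 hx.1, lt_of_lt_of_le hx.2 hθ₂.2⟩⟩
  have hθμS' : ∀ x, x ∈ Set.Ioc θ₁ θμ → x ∈ S := by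
    intro x hx
    exact ⟨⟨hx.1.le, le_trans hx.2 hθ₂.1⟩, ⟨lt_of_le_of_lt hθ₁.1 hx.1, lt_of_le_of_lt hx.2 hπ⟩⟩
  -- pointwise bound
  set g₂ : ℝ → ENNReal := fun θ =>
    ENNReal.ofReal (‖(F θ - F θμ) / ((θ:ℂ) - (θμ:ℂ))‖^2) with hg₂_def
  set g₃ : ℝ → ENNReal := fun θ => ENNReal.ofReal (‖deriv F θ‖^2) with hg₃_def
  have hpt : ∀ θ ∈ Set.Ioo θ₁ θ₂,
      ENNReal.ofReal (‖(F θ - F θμ) / ((μ : ℂ) - (Real.cos θ : ℂ))‖^2)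
        ≤ ENNReal.ofReal (4 / s₀^2) * g₂ θ := by
    intro θ hθ
    have hθΙ : θ ∈ Set.Icc 0 π := ⟨le_trans hθ₁.1 hθ.1.le, le_trans hθ.2.le hθ₂.2⟩
    have hkl := key_lower hμ hθμ hθΙ
    set A := ‖F θ - F θμ‖ with hA
    have hnorm1 : ‖(F θ - F θμ) / ((μ : ℂ) - (Real.cos θ : ℂ))‖ = A / |μ - Real.cos θ| := by
      rw [norm_div]
      congr 1
      rw [show ((μ : ℂ) - (Real.cos θ : ℂ)) = ((μ - Real.cos θ : ℝ) : ℂ) by push_cast; ring]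
      exact Complex.norm_real _
    have hnorm2 : ‖(F θ - F θμ) / ((θ:ℂ) - (θμ:ℂ))‖ = A / |θ - θμ| := by
      rw [norm_div]
      congr 1
      rw [show ((θ : ℂ) - (θμ : ℂ)) = ((θ - θμ : ℝ) : ℂ) by push_cast; ring]
      exact Complex.norm_real _
    simp only [hg₂_def]
    rw [hnorm1, hnorm2]
    rw [← ENNReal.ofReal_mul (by positivity)]
    apply ENNReal.ofReal_le_ofReal
    by_cases hθc : θ = θμ
    · subst hθc
      simp [hA]
    · have hC : 0 < |θ - θμ| := abs_pos.2 (sub_ne_zero.2 hθc)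
      set C := |θ - θμ| with hC_def
      have hB : 0 < |μ - Real.cos θ| := lt_of_lt_of_le (by positivity) hkl
      have hAnn : 0 ≤ A := norm_nonneg _
      rw [div_pow, div_pow]
      have hsq : (s₀/2 * |θ - θμ|)^2 ≤ |μ - Real.cos θ|^2 := by
        apply sq_le_sq' _ hkl
        nlinarith [hkl, hC, hs]
      have h1 : A^2 / |μ - Real.cos θ|^2 ≤ A^2 / (s₀/2 * |θ - θμ|)^2 := by
        apply div_le_div_of_nonneg_left (by positivity) (by positivity) hsq
      refine le_trans h1 (le_of_eq ?_)
      have hCne : C ≠ 0 := ne_of_gt hC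
      have hs₀ne : s₀ ≠ 0 := ne_of_gt hs
      field_simp
      ring
  -- assemble
  calc (∫⁻ θ in Set.Ioo θ₁ θ₂,
        ENNReal.ofReal (‖(F θ - F θμ) / ((μ : ℂ) - (Real.cos θ : ℂ))‖ ^ 2))
      ≤ ∫⁻ θ in Set.Ioo θ₁ θ₂, ENNReal.ofReal (4 / s₀^2) * g₂ θ :=
        MeasureTheory.setLIntegral_mono' measurableSet_Ioo hpt
    _ = ENNReal.ofReal (4 / s₀^2) * ∫⁻ θ in Set.Ioo θ₁ θ₂, g₂ θ :=
        MeasureTheory.lintegral_const_mul' _ _ ENNReal.ofReal_ne_top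
    _ ≤ ENNReal.ofReal (4 / s₀^2) *
          ((∫⁻ θ in Set.Ioo θ₁ θμ, g₂ θ) + ∫⁻ θ in Set.Ioo θμ θ₂, g₂ θ) := by
        apply mul_le_mul_right
        have hsub : Set.Ioo θ₁ θ₂ ⊆ (Set.Ioo θ₁ θμ ∪ Set.Ioo θμ θ₂) ∪ {θμ} := by
          intro x hx
          rcases lt_trichotomy x θμ with h | h | h
          · exact Or.inl (Or.inl ⟨hx.1, h⟩)
          · exact Or.inr (by simp [h])
          · exact Or.inl (Or.inr ⟨h, hx.2⟩)
        calc ∫⁻ θ in Set.Ioo θ₁ θ₂, g₂ θ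
            ≤ ∫⁻ θ in (Set.Ioo θ₁ θμ ∪ Set.Ioo θμ θ₂) ∪ {θμ}, g₂ θ :=
              MeasureTheory.lintegral_mono_set hsub
          _ ≤ (∫⁻ θ in Set.Ioo θ₁ θμ ∪ Set.Ioo θμ θ₂, g₂ θ) + ∫⁻ θ in {θμ}, g₂ θ :=
              MeasureTheory.lintegral_union_le _ _ _
          _ = ∫⁻ θ in Set.Ioo θ₁ θμ ∪ Set.Ioo θμ θ₂, g₂ θ := by
              rw [MeasureTheory.setLIntegral_measure_zero _ _ (measure_singleton θμ), add_zero]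
          _ ≤ (∫⁻ θ in Set.Ioo θ₁ θμ, g₂ θ) + ∫⁻ θ in Set.Ioo θμ θ₂, g₂ θ :=
              MeasureTheory.lintegral_union_le _ _ _
    _ ≤ ENNReal.ofReal (4 / s₀^2) *
          ((4 * ∫⁻ θ in Set.Ioo θ₁ θμ, g₃ θ) + 4 * ∫⁻ θ in Set.Ioo θμ θ₂, g₃ θ) := by
        apply mul_le_mul_right
        apply add_le_add
        · apply hardy_left hθ₁.2
          · intro x hx
            rw [hDeriv x (hθμS' x hx)]
            exact hD x (hθμS' x hx)
          · exact ((hDc.mono hθμS').congr (fun x hx => hDeriv x (hθμS' x hx)))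
        · apply hardy_right hθ₂.1
          · intro x hx
            rw [hDeriv x (hθμS x hx)]
            exact hD x (hθμS x hx)
          · exact ((hDc.mono hθμS).congr (fun x hx => hDeriv x (hθμS x hx)))
    _ ≤ ENNReal.ofReal (4 / s₀^2) * (4 * ∫⁻ θ in Set.Ioo θ₁ θ₂, g₃ θ) := by
        apply mul_le_mul_right
        rw [← mul_add]
        apply mul_le_mul_right
        have hdisj : Disjoint (Set.Ioo θ₁ θμ) (Set.Ioo θμ θ₂) := by
          apply Set.disjoint_left.mpr
          intro x hx hx'
          exact absurd hx'.1 (not_lt.2 hx.2.le)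
        rw [← MeasureTheory.lintegral_union measurableSet_Ioo hdisj]
        apply MeasureTheory.lintegral_mono_set
        intro x hx
        rcases hx with hx | hx
        · exact ⟨hx.1, lt_of_lt_of_le hx.2 hθ₂.1⟩
        · exact ⟨lt_of_le_of_lt hθ₁.2 hx.1, hx.2⟩
    _ = ENNReal.ofReal (16 / s₀^2) * ∫⁻ θ in Set.Ioo θ₁ θ₂, g₃ θ := by
        rw [← mul_assoc]
        congr 1
        rw [show (4 : ENNReal) = ENNReal.ofReal 4 by norm_num,
          ← ENNReal.ofReal_mul (by positivity)]
        congr 1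
        ring
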